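/- Let m ≥ 3 be odd with s = max{v₂(m+1), v₂(m−1)}, and write T_m(x) = Σ_{i=0}^{(m−1)/2} c_{2i+1} x^{2i+1}. Then for every i with 1 < i ≤ (m−1)/2, the coefficient c_{2i+1} satisfies v₂(c_{2i+1}) ≥ s+1. -/

import Mathlib

open Polynomial Polynomial.Chebyshev

theorem cheb_ode (n : ℤ) : (1 - X^2 : ℤ[X]) * derivative (derivative (T ℤ n)) + ((n:ℤ[X]))^2 * T ℤ n = X * derivative (T ℤ n) := by
  have h1 := T_derivative_eq_U (R := ℤ) n
  have h3 := T_derivative_eq_U (R := ℤ) (n+1)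
  have h2 := one_sub_X_sq_mul_U_eq_pol_in_T ℤ (n-1)
  rw [show n - 1 + 1 = n from by ring, show n - 1 + 2 = n + 1 from by ring] at h2
  rw [show n + 1 - 1 = n from by ring] at h3
  have h2' := congr_arg derivative h2
  have h1' := congr_arg derivative h1
  have hT := T_eq_U_sub_X_mul_U ℤ n
  simp only [derivative_mul, derivative_sub, derivative_one, derivative_X, derivative_X_pow,
    derivative_intCast, C_eq_intCast, Nat.cast_ofNat, map_ofNat] at h1' h2'
  rw [h1, h3] at h2'
  rw [h1', h1]
  linear_combination (norm := (push_cast; ring_nf)) (n:ℤ[X]) * h2' + (n:ℤ[X])*((n:ℤ[X])+1) * hT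

theorem cheb_rec_base (n : ℤ) : 6 * (T ℤ n).coeff 3 = (1 - n^2) * (T ℤ n).coeff 1 := by
  have h := congr_arg (fun p => p.coeff 1) (cheb_ode n)
  simp only [sub_mul, one_mul, coeff_sub, coeff_add] at h
  rw [mul_comm (X^2 : ℤ[X]), coeff_mul_X_pow'] at h
  rw [show ((n:ℤ[X]))^2 = C (n^2) from by rw [map_pow]; simp] at h
  rw [coeff_C_mul, show (1:ℕ) = 0 + 1 from rfl, coeff_X_mul] at h
  simp only [coeff_derivative] at h
  norm_num at h
  linear_combination h

theorem cheb_rec (n : ℤ) (d : ℕ) : ((d:ℤ)+3)*((d:ℤ)+4) * (T ℤ n).coeff (d+4) = (((d:ℤ)+2)^2 - n^2) * (T ℤ n).coeff (d+2) := by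
  have h := congr_arg (fun p => p.coeff (d+2)) (cheb_ode n)
  simp only [sub_mul, one_mul, coeff_sub, coeff_add] at h
  rw [mul_comm (X^2 : ℤ[X]), coeff_mul_X_pow'] at h
  rw [show ((n:ℤ[X]))^2 = C (n^2) from by rw [map_pow]; simp] at h
  rw [coeff_C_mul, show d+2 = (d+1) + 1 from rfl, coeff_X_mul] at h
  simp only [coeff_derivative] at h
  norm_num at h
  push_cast at h
  linear_combination h

theorem T_coeff_one_odd : ∀ k : ℕ, Odd ((T ℤ (2*(k:ℤ)+1)).coeff 1) := by
  intro k; induction k with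
  | zero =>
    norm_num [T_one]
  | succ k ih =>
    have h := T_add_two ℤ (2*(k:ℤ)+1)
    rw [show ((k+1:ℕ):ℤ) = (k:ℤ)+1 from by push_cast; ring,
        show 2*((k:ℤ)+1)+1 = (2*(k:ℤ)+1)+2 from by ring, h, coeff_sub]
    have h2 : ((2:ℤ[X])*X*T ℤ (2*(k:ℤ)+1+1)).coeff 1 = 2 * (T ℤ (2*(k:ℤ)+1+1)).coeff 0 := by
      rw [show (2:ℤ[X]) = C 2 from by norm_num, mul_assoc, coeff_C_mul,
          show (1:ℕ) = 0+1 from rfl, coeff_X_mul]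
    rw [h2]
    obtain ⟨t, ht⟩ := ih
    exact ⟨(T ℤ (2*(k:ℤ)+1+1)).coeff 0 - t - 1, by rw [ht]; ring⟩

theorem chebyshev_higher_coeff_valuation (m : ℕ) (hm : 3 ≤ m) (hodd : Odd m)
    (s : ℕ) (hs : s = max (padicValNat 2 (m + 1)) (padicValNat 2 (m - 1)))
    (i : ℕ) (hi1 : 1 < i) (hi2 : i ≤ (m - 1) / 2) :
    s + 1 ≤ padicValInt 2 ((Polynomial.Chebyshev.T ℤ m).coeff (2 * i + 1)) := by
  haveI : Fact (Nat.Prime 2) := ⟨Nat.prime_two⟩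
  obtain ⟨k0, hk0⟩ := hodd
  have hmz : (m:ℤ) = 2*(k0:ℤ)+1 := by rw [hk0]; push_cast; ring
  set c : ℕ → ℤ := fun j => (T ℤ (m:ℤ)).coeff j with hc
  -- c 1 is odd
  have hc1odd : Odd (c 1) := by
    have := T_coeff_one_odd k0
    rw [← hmz] at this
    exact this
  have hc1ne : c 1 ≠ 0 := by
    rintro h
    rw [h] at hc1odd
    exact (Int.not_odd_iff_even.mpr Even.zero) hc1odd
  -- 2^(s+1) ∣ m^2 - 1
  have hdvd1 : (2:ℤ)^(s+1) ∣ (m:ℤ)^2 - 1 := by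
    have hsq : (m:ℤ)^2 - 1 = ((m:ℤ)+1) * ((m:ℤ)-1) := by ring
    have ha : (2:ℤ)^(padicValNat 2 (m+1)) ∣ ((m:ℤ)+1) := by
      have := pow_padicValNat_dvd (p := 2) (n := m+1)
      have h2 : ((m:ℤ)+1) = ((m+1:ℕ):ℤ) := by push_cast; ring
      rw [h2]
      exact_mod_cast Int.natCast_dvd_natCast.mpr this
    have hb : (2:ℤ)^(padicValNat 2 (m-1)) ∣ ((m:ℤ)-1) := by
      have := pow_padicValNat_dvd (p := 2) (n := m-1)
      have h2 : ((m:ℤ)-1) = ((m-1:ℕ):ℤ) := by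
        have : (1:ℕ) ≤ m := by omega
        push_cast [this]; ring
      rw [h2]
      exact_mod_cast Int.natCast_dvd_natCast.mpr this
    have hea : (2:ℤ) ∣ ((m:ℤ)+1) := ⟨(k0:ℤ)+1, by rw [hmz]; ring⟩
    have heb : (2:ℤ) ∣ ((m:ℤ)-1) := ⟨(k0:ℤ), by rw [hmz]; ring⟩
    rw [hsq]
    rcases le_total (padicValNat 2 (m-1)) (padicValNat 2 (m+1)) with h|h
    · have hsa : s = padicValNat 2 (m+1) := by omega
      rw [hsa, pow_succ]
      exact mul_dvd_mul ha heb
    · have hsb : s = padicValNat 2 (m-1) := by omega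
      rw [hsb, pow_succ, mul_comm (((m:ℤ)+1)) (((m:ℤ)-1))]
      exact mul_dvd_mul hb hea
  -- odd squares congruent mod 8
  have hdvd8 : ∀ j : ℕ, (8:ℤ) ∣ (2*(j:ℤ)+1)^2 - (m:ℤ)^2 := by
    intro j
    rcases Int.even_or_odd ((j:ℤ)+(k0:ℤ)) with ⟨t,ht⟩|⟨t,ht⟩
    · exact ⟨(t-(k0:ℤ))*((j:ℤ)+(k0:ℤ)+1), by rw [hmz]; linear_combination (4*((j:ℤ)+(k0:ℤ)+1))*ht⟩
    · exact ⟨((j:ℤ)-(k0:ℤ))*(t+1), by rw [hmz]; linear_combination (4*((j:ℤ)-(k0:ℤ)))*ht⟩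
  -- main induction
  have key : ∀ n : ℕ, 1 ≤ n → n ≤ (m-1)/2 →
      ∃ D : ℤ, D ≠ 0 ∧ (2:ℤ)^(s+1) * 8^(n-1) ∣ D ∧ (Nat.factorial (2*n+1) : ℤ) * c (2*n+1) = c 1 * D := by
    intro n
    induction n with
    | zero => omega
    | succ n ih =>
      intro _ hn2
      rcases Nat.eq_zero_or_pos n with rfl|hn1
      · refine ⟨1 - (m:ℤ)^2, ?_, ?_, ?_⟩
        · have h3 : (3:ℤ) ≤ (m:ℤ) := by exact_mod_cast hm
          nlinarith
        · simp only [Nat.sub_self, pow_zero, mul_one]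
          rw [show (1:ℤ) - (m:ℤ)^2 = -((m:ℤ)^2 - 1) from by ring]
          exact dvd_neg.mpr hdvd1
        · have hb := cheb_rec_base (m:ℤ)
          have hf : (Nat.factorial (2*1+1) : ℤ) = 6 := by norm_num [Nat.factorial]
          rw [hf]
          show (6:ℤ) * c 3 = c 1 * (1 - (m:ℤ)^2)
          linear_combination hb
      · obtain ⟨D, hDne, hDdvd, hDeq⟩ := ih hn1 (by omega)
        have A := cheb_rec (m:ℤ) (2*n-1)
        have e4 : 2*n-1+4 = 2*(n+1)+1 := by omega
        have e2 : 2*n-1+2 = 2*n+1 := by omega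
        rw [e4, e2, Nat.cast_sub (by omega : (1:ℕ) ≤ 2*n)] at A
        push_cast at A
        -- A : (2n+2)(2n+3) * c (2(n+1)+1) = ((2n+1)^2 - m^2) * c (2n+1)
        refine ⟨((2*(n:ℤ)+1)^2 - (m:ℤ)^2) * D, ?_, ?_, ?_⟩
        · apply mul_ne_zero _ hDne
          have hlt : 2*(n:ℤ)+1 < (m:ℤ) := by
            have h1 : (2*n+2 : ℕ) ≤ m := by clear * - hn2 hm; omega
            have h2 : ((2*n+2:ℕ):ℤ) ≤ (m:ℤ) := Nat.cast_le.mpr h1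
            push_cast at h2
            omega
          have hpos : (0:ℤ) < 2*(n:ℤ)+1 := by positivity
          nlinarith
        · have h8 : (8:ℤ) ∣ (2*(n:ℤ)+1)^2 - (m:ℤ)^2 := hdvd8 n
          have : (2:ℤ)^(s+1) * 8^(n-1) * 8 ∣ D * ((2*(n:ℤ)+1)^2 - (m:ℤ)^2) :=
            mul_dvd_mul hDdvd h8
          have e8 : (2:ℤ)^(s+1) * 8^(n+1-1) = (2:ℤ)^(s+1) * 8^(n-1) * 8 := by
            rw [show n+1-1 = (n-1)+1 from by omega, pow_succ]; ring
          rw [e8, mul_comm ((2*(n:ℤ)+1)^2 - (m:ℤ)^2) D]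
          exact this
        · have hfs : (Nat.factorial (2*(n+1)+1) : ℤ) = (2*(n:ℤ)+3) * ((2*(n:ℤ)+2) * (Nat.factorial (2*n+1) : ℤ)) := by
            rw [show 2*(n+1)+1 = (2*n+1)+1+1 from by omega]
            rw [Nat.factorial_succ, Nat.factorial_succ]
            push_cast; ring
          rw [hfs]
          linear_combination (Nat.factorial (2*n+1) : ℤ) * A + ((2*(n:ℤ)+1)^2 - (m:ℤ)^2) * hDeq
  obtain ⟨D, hDne, hDdvd, hDeq⟩ := key i (by omega) hi2
  have hfne : (Nat.factorial (2*i+1) : ℤ) ≠ 0 := by exact_mod_cast (Nat.factorial_pos (2*i+1)).ne'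
  have hcne : c (2*i+1) ≠ 0 := by
    rintro h
    rw [h, mul_zero] at hDeq
    exact mul_ne_zero hc1ne hDne hDeq.symm
  -- valuations
  have hvfact : padicValNat 2 (Nat.factorial (2*i+1)) ≤ 2*i - 1 := by
    rw [show 2*i+1 = (2*i)+1 from rfl, Nat.factorial_succ,
        padicValNat.mul (by omega) (Nat.factorial_pos (2*i)).ne']
    have hodd2 : padicValNat 2 (2*i+1) = 0 := padicValNat.eq_zero_of_not_dvd (by omega)
    have hlt := Nat.emultiplicity_two_factorial_lt (show 2*i ≠ 0 by omega)
    rw [← padicValNat_eq_emultiplicity (p := 2) (Nat.factorial_pos (2*i)).ne'] at hlt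
    have : padicValNat 2 (Nat.factorial (2*i)) < 2*i := by exact_mod_cast hlt
    omega
  have hvD : s+1+3*(i-1) ≤ padicValInt 2 D := by
    have hd : (2:ℤ)^(s+1+3*(i-1)) ∣ D := by
      have : (2:ℤ)^(s+1+3*(i-1)) = (2:ℤ)^(s+1) * 8^(i-1) := by
        rw [pow_add, pow_mul]; norm_num
      rw [this]; exact hDdvd
    exact ((padicValInt_dvd_iff _ _).mp hd).resolve_left hDne
  have hvc1 : padicValInt 2 (c 1) = 0 := by
    apply padicValInt.eq_zero_of_not_dvd
    intro h
    obtain ⟨t, ht⟩ := hc1odd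
    omega
  have heq := congr_arg (padicValInt 2) hDeq
  rw [padicValInt.mul hfne hcne, padicValInt.mul hc1ne hDne, hvc1] at heq
  have hvi : padicValInt 2 ((Nat.factorial (2*i+1) : ℕ) : ℤ) = padicValNat 2 (Nat.factorial (2*i+1)) := padicValInt.of_nat
  rw [hvi] at heq
  show s + 1 ≤ padicValInt 2 (c (2*i+1))
  omega
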